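/- Let F : 2^V → ℝ be submodular with F(∅)=0 and P(S) ∝ exp(−F(S)). Then min over factorized positive distributions Q of D_∞(P‖Q) equals −log Z_P + min_{s∈B(F)} ∑_{i∈V} log(1+exp(−s_i)); in particular, the divergence minimization problem and the L-Field variational problem have the same optimal modular parameter. -/

import Mathlib

/-- A set function is submodular iff it has diminishing marginal gains. -/
def Submodular {V : Type*} [DecidableEq V] (F : Finset V → ℝ) : Prop :=
  ∀ A B : Finset V, A ⊆ B → ∀ x ∉ B,
    F (insert x B) - F B ≤ F (insert x A) - F A

/-- The base polytope `B(F)` of a normalized submodular function. -/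
def basePolytope {V : Type*} [Fintype V] [DecidableEq V] (F : Finset V → ℝ) :
    Set (V → ℝ) :=
  {s | (∀ A : Finset V, ∑ i ∈ A, s i ≤ F A) ∧ ∑ i : V, s i = F Finset.univ}

/-- The Rényi divergence of infinite order between `P(S) ∝ exp(-F(S))` and
the factorized distribution `Q(S) ∝ ∏_{i∈S} exp(-qᵢ)`. -/
noncomputable def dInfty {V : Type*} [Fintype V] [DecidableEq V]
    (F : Finset V → ℝ) (q : V → ℝ) : ℝ :=
  Real.log ((Finset.univ : Finset (Finset V)).sup' Finset.univ_nonempty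
    (fun S => (Real.exp (-(F S)) / ∑ A : Finset V, Real.exp (-(F A))) /
              (Real.exp (-(∑ i ∈ S, q i)) /
                ∑ A : Finset V, Real.exp (-(∑ i ∈ A, q i)))))

set_option linter.unusedSectionVars false
set_option linter.unusedVariables false
set_option maxHeartbeats 800000

section aux
variable {V : Type*} [Fintype V] [DecidableEq V]

lemma submodular_diff {G : Finset V → ℝ} (h : Submodular G) :
    ∀ (E C D : Finset V), C ⊆ D → Disjoint E D →
      G (D ∪ E) - G D ≤ G (C ∪ E) - G C := by
  intro E
  induction E using Finset.induction with
  | empty => simp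
  | insert a s hx ih =>
    intro C D hCD hdisj
    rw [Finset.disjoint_insert_left] at hdisj
    obtain ⟨haD, hsD⟩ := hdisj
    have haC : a ∉ C := fun hc => haD (hCD hc)
    have haDs : a ∉ D ∪ s := by simp [haD, hx]
    have haCs : a ∉ C ∪ s := by simp [haC, hx]
    have hsub1 : C ∪ s ⊆ D ∪ s := Finset.union_subset_union hCD (le_refl s)
    have h1 := h (C ∪ s) (D ∪ s) hsub1 a haDs
    have h2 := ih C D hCD hsD
    rw [Finset.union_insert, Finset.union_insert]
    linarith

lemma submodular_union_inter {G : Finset V → ℝ} (h : Submodular G) (A B : Finset V) :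
    G (A ∪ B) + G (A ∩ B) ≤ G A + G B := by
  have := submodular_diff h (B \ A) (A ∩ B) A (Finset.inter_subset_left) (Finset.sdiff_disjoint)
  have he : A ∩ B ∪ B \ A = B := by
    ext y; simp only [Finset.mem_union, Finset.mem_inter, Finset.mem_sdiff]; tauto
  rw [Finset.union_sdiff_self_eq_union, he] at this
  linarith

/-- Extension lemma: a vector in the submodular polyhedron can be raised to the base. -/
lemma exists_base_ge {G : Finset V → ℝ} (hsub : Submodular G) (hG0 : G ∅ = 0) :
    ∀ (T : Finset V) (q : V → ℝ), (∀ A : Finset V, ∑ i ∈ A, q i ≤ G A) →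
    (∀ i ∉ T, ∃ A : Finset V, i ∈ A ∧ ∑ j ∈ A, q j = G A) →
    ∃ s : V → ℝ, (∀ i, q i ≤ s i) ∧ (∀ A : Finset V, ∑ i ∈ A, s i ≤ G A) ∧
      ∑ i : V, s i = G Finset.univ := by
  intro T
  induction T using Finset.induction with
  | empty =>
    intro q hq htight
    refine ⟨q, fun i => le_refl _, hq, ?_⟩
    have key : ∀ S : Finset V, ∃ A : Finset V, S ⊆ A ∧ ∑ j ∈ A, q j = G A := by
      intro S
      induction S using Finset.induction with
      | empty => exact ⟨∅, by simp, by simp [hG0]⟩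
      | insert x S hx ih =>
        obtain ⟨A, hSA, hAt⟩ := ih
        obtain ⟨B, hxB, hBt⟩ := htight x (Finset.notMem_empty x)
        refine ⟨A ∪ B, ?_, ?_⟩
        · intro y hy
          rcases Finset.mem_insert.mp hy with rfl | hy
          · exact Finset.mem_union_right _ hxB
          · exact Finset.mem_union_left _ (hSA hy)
        · have h1 := submodular_union_inter hsub A B
          have h2 : ∑ j ∈ A ∪ B, q j + ∑ j ∈ A ∩ B, q j = ∑ j ∈ A, q j + ∑ j ∈ B, q j :=
            Finset.sum_union_inter
          have h3 := hq (A ∪ B)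
          have h4 := hq (A ∩ B)
          linarith
    obtain ⟨A, hA, htA⟩ := key Finset.univ
    have hAu : A = Finset.univ := Finset.univ_subset_iff.mp hA
    rw [hAu] at htA
    exact htA
  | insert j T hj ih =>
    intro q hq htight
    set 𝒜 : Finset (Finset V) := Finset.univ.filter (fun A => j ∈ A) with h𝒜def
    have h𝒜 : 𝒜.Nonempty := ⟨{j}, by simp [h𝒜def]⟩
    set δ := 𝒜.inf' h𝒜 (fun A => G A - ∑ i ∈ A, q i) with hδdef
    have hδ0 : 0 ≤ δ := by
      apply Finset.le_inf'
      intro A hA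
      have := hq A
      linarith
    set q' : V → ℝ := fun i => q i + if i = j then δ else 0 with hq'def
    have hsum : ∀ A : Finset V, ∑ i ∈ A, q' i
        = ∑ i ∈ A, q i + (if j ∈ A then δ else 0) := by
      intro A
      rw [hq'def]
      rw [Finset.sum_add_distrib, Finset.sum_ite_eq' A j (fun _ => δ)]
    have hq' : ∀ A : Finset V, ∑ i ∈ A, q' i ≤ G A := by
      intro A
      rw [hsum]
      by_cases hjA : j ∈ A
      · have : δ ≤ G A - ∑ i ∈ A, q i := Finset.inf'_le _ (by simp [h𝒜def, hjA])
        simp only [hjA, if_true]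
        linarith
      · simp only [hjA, if_false]
        simpa using hq A
    have htight' : ∀ i ∉ T, ∃ A : Finset V, i ∈ A ∧ ∑ k ∈ A, q' k = G A := by
      intro i hiT
      by_cases hij : i = j
      · obtain ⟨A₀, hA₀, hval⟩ := Finset.exists_mem_eq_inf' h𝒜 (fun A => G A - ∑ i ∈ A, q i)
        have hjA₀ : j ∈ A₀ := by
          rw [h𝒜def] at hA₀; exact (Finset.mem_filter.mp hA₀).2
        refine ⟨A₀, hij ▸ hjA₀, ?_⟩
        rw [hsum, if_pos hjA₀, ← hδdef] at *
        rw [hval]; ring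
      · obtain ⟨A, hiA, hAt⟩ := htight i (by simp [hij, hiT])
        refine ⟨A, hiA, ?_⟩
        rw [hsum]
        by_cases hjA : j ∈ A
        · have hle : δ ≤ G A - ∑ i ∈ A, q i := Finset.inf'_le _ (by simp [h𝒜def, hjA])
          have : δ = 0 := le_antisymm (by rw [hAt] at hle; linarith) hδ0
          simp [this, hAt]
        · simp [hjA, hAt]
    obtain ⟨s, hqs, hs1, hs2⟩ := ih q' hq' htight'
    refine ⟨s, ?_, hs1, hs2⟩
    intro i
    refine le_trans ?_ (hqs i)
    rw [hq'def]
    by_cases hij : i = j <;> simp [hij, hδ0]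

end aux


section aux
variable {V : Type*} [Fintype V] [DecidableEq V]

lemma sum_exp_eq_prod (q : V → ℝ) :
    ∑ A : Finset V, Real.exp (-(∑ i ∈ A, q i)) = ∏ i : V, (1 + Real.exp (-(q i))) := by
  have h : ∀ i : V, (1 : ℝ) + Real.exp (-(q i)) = Real.exp (-(q i)) + 1 := fun i => by ring
  simp only [h]
  rw [Finset.prod_add]
  rw [← Finset.powerset_univ]
  refine Finset.sum_congr rfl ?_
  intro A _
  simp [Real.exp_sum, Real.exp_neg, ← Finset.prod_inv_distrib]

lemma log_sum_exp (q : V → ℝ) :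
    Real.log (∑ A : Finset V, Real.exp (-(∑ i ∈ A, q i)))
      = ∑ i : V, Real.log (1 + Real.exp (-(q i))) := by
  rw [sum_exp_eq_prod, Real.log_prod]
  intro i _
  positivity

lemma Zq_pos (q : V → ℝ) : 0 < ∑ A : Finset V, Real.exp (-(∑ i ∈ A, q i)) :=
  Finset.sum_pos (fun A _ => Real.exp_pos _) Finset.univ_nonempty

lemma Zp_pos (F : Finset V → ℝ) : 0 < ∑ A : Finset V, Real.exp (-(F A)) :=
  Finset.sum_pos (fun A _ => Real.exp_pos _) Finset.univ_nonempty

end aux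


section aux2
variable {V : Type*} [Fintype V] [DecidableEq V]

lemma dual_submodular {F : Finset V → ℝ} (h : Submodular F) :
    Submodular (fun A => F (Finset.univ \ A) - F Finset.univ) := by
  intro A B hAB x hxB
  simp only
  have hxU : x ∈ Finset.univ \ B := by simp [hxB]
  have hxUA : x ∈ Finset.univ \ A :=
    Finset.mem_sdiff.mpr ⟨Finset.mem_univ x, fun hc => hxB (hAB hc)⟩
  set C := (Finset.univ \ B).erase x with hC
  set D := (Finset.univ \ A).erase x with hD
  have hCD : C ⊆ D := Finset.erase_subset_erase x (Finset.sdiff_subset_sdiff (le_refl _) hAB)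
  have hxD : x ∉ D := Finset.notMem_erase x _
  have h1 : Finset.univ \ insert x B = C := by
    rw [hC]; ext y
    simp only [Finset.mem_sdiff, Finset.mem_insert, Finset.mem_erase, Finset.mem_univ,
      true_and]
    tauto
  have h2 : Finset.univ \ insert x A = D := by
    rw [hD]; ext y
    simp only [Finset.mem_sdiff, Finset.mem_insert, Finset.mem_erase, Finset.mem_univ,
      true_and]
    tauto
  have h3 : insert x C = Finset.univ \ B := Finset.insert_erase hxU
  have h4 : insert x D = Finset.univ \ A := Finset.insert_erase hxUA
  have := h C D hCD x hxD
  rw [h3, h4] at this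
  rw [h1, h2]
  linarith

lemma exists_base_le {F : Finset V → ℝ} (hsub : Submodular F) (hF0 : F ∅ = 0)
    (u : V → ℝ) (hu : ∀ A : Finset V, F Finset.univ - ∑ i ∈ A, u i ≤ F (Finset.univ \ A)) :
    ∃ s : V → ℝ, (∀ i, s i ≤ u i) ∧ (∀ A : Finset V, ∑ i ∈ A, s i ≤ F A) ∧
      ∑ i : V, s i = F Finset.univ := by
  set G : Finset V → ℝ := fun A => F (Finset.univ \ A) - F Finset.univ with hGdef
  have hG0 : G ∅ = 0 := by simp [hGdef]
  have hGsub : Submodular G := dual_submodular hsub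
  have hq : ∀ A : Finset V, ∑ i ∈ A, (-u) i ≤ G A := by
    intro A
    have := hu A
    simp only [hGdef, Pi.neg_apply, Finset.sum_neg_distrib]
    linarith
  obtain ⟨t, hut, ht1, ht2⟩ := exists_base_ge hGsub hG0 Finset.univ (-u) hq
    (fun i hi => absurd (Finset.mem_univ i) hi)
  refine ⟨fun i => -(t i), fun i => ?_, fun A => ?_, ?_⟩
  · have := hut i
    simp only [Pi.neg_apply] at this
    show -(t i) ≤ u i
    linarith
  · have hsumsplit : ∑ i ∈ Finset.univ \ A, t i + ∑ i ∈ A, t i = ∑ i : V, t i :=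
      Finset.sum_sdiff (Finset.subset_univ A)
    have h2 : Finset.univ \ (Finset.univ \ A) = A := by
      simp [Finset.sdiff_sdiff_self_left]
    have h1' : ∑ i ∈ Finset.univ \ A, t i ≤ F A - F Finset.univ := by
      have h1 := ht1 (Finset.univ \ A)
      simp only [hGdef] at h1
      rw [h2] at h1
      exact h1
    have h3 : ∑ i : V, t i = - F Finset.univ := by
      rw [ht2]; simp [hGdef, hF0]
    have h4 : ∑ i ∈ A, (fun i => -(t i)) i = -∑ i ∈ A, t i := by simp
    rw [h4]
    linarith
  · have h3 : ∑ i : V, t i = - F Finset.univ := by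
      rw [ht2]; simp [hGdef, hF0]
    have h4 : ∑ i : V, (fun i => -(t i)) i = -∑ i : V, t i := by simp
    rw [h4, h3, neg_neg]

lemma base_nonempty {F : Finset V → ℝ} (hsub : Submodular F) (hF0 : F ∅ = 0) :
    ∃ s : V → ℝ, (∀ A : Finset V, ∑ i ∈ A, s i ≤ F A) ∧ ∑ i : V, s i = F Finset.univ := by
  set m : ℝ := (Finset.univ : Finset (Finset V)).inf' Finset.univ_nonempty F with hm
  set C : ℝ := min m 0 with hC
  have hq : ∀ A : Finset V, ∑ i ∈ A, (fun _ : V => C) i ≤ F A := by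
    intro A
    rcases Finset.eq_empty_or_nonempty A with rfl | hA
    · simp [hF0]
    · rw [Finset.sum_const, nsmul_eq_mul]
      have h1 : (A.card : ℝ) ≥ 1 := by
        have := Finset.card_pos.mpr hA
        exact_mod_cast this
      have hC0 : C ≤ 0 := min_le_right _ _
      have hCm : C ≤ m := min_le_left _ _
      have hmF : m ≤ F A := Finset.inf'_le _ (Finset.mem_univ A)
      nlinarith
  obtain ⟨s, _, hs1, hs2⟩ := exists_base_ge hsub hF0 Finset.univ (fun _ => C) hq
    (fun i hi => absurd (Finset.mem_univ i) hi)
  exact ⟨s, hs1, hs2⟩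

end aux2

section aux3
variable {V : Type*} [Fintype V] [DecidableEq V]

lemma exists_min_on_base {F : Finset V → ℝ} (hsub : Submodular F) (hF0 : F ∅ = 0) :
    ∃ s ∈ basePolytope F, ∀ z ∈ basePolytope F,
      ∑ i : V, Real.log (1 + Real.exp (-(s i)))
        ≤ ∑ i : V, Real.log (1 + Real.exp (-(z i))) := by
  have hne : (basePolytope F).Nonempty := by
    obtain ⟨s, h1, h2⟩ := base_nonempty hsub hF0
    exact ⟨s, h1, h2⟩
  have hclosed : IsClosed (basePolytope F) := by
    have heq : basePolytope F = (⋂ A : Finset V, {s : V → ℝ | ∑ i ∈ A, s i ≤ F A}) ∩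
        {s : V → ℝ | ∑ i : V, s i = F Finset.univ} := by
      ext s
      constructor
      · rintro ⟨h1, h2⟩
        exact ⟨Set.mem_iInter.mpr h1, h2⟩
      · rintro ⟨h1, h2⟩
        exact ⟨Set.mem_iInter.mp h1, h2⟩
    rw [heq]
    refine IsClosed.inter (isClosed_iInter fun A => ?_) ?_
    · exact isClosed_le (continuous_finset_sum _ fun i _ => continuous_apply i) continuous_const
    · exact isClosed_eq (continuous_finset_sum _ fun i _ => continuous_apply i) continuous_const
  set lo : V → ℝ := fun i => F Finset.univ - ∑ j ∈ Finset.univ.erase i, F {j} with hlo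
  set hi : V → ℝ := fun i => F {i} with hhi
  have hsubset : basePolytope F ⊆ Set.Icc lo hi := by
    rintro s ⟨h1, h2⟩
    constructor
    · intro i
      have hs : ∀ j, s j ≤ F {j} := fun j => by simpa using h1 {j}
      have hle : ∑ j ∈ Finset.univ.erase i, s j ≤ ∑ j ∈ Finset.univ.erase i, F {j} :=
        Finset.sum_le_sum fun j _ => hs j
      have hsplit : ∑ j ∈ Finset.univ.erase i, s j + s i = ∑ j : V, s j :=
        Finset.sum_erase_add _ _ (Finset.mem_univ i)
      rw [h2] at hsplit
      show lo i ≤ s i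
      simp only [hlo]
      linarith
    · intro i
      show s i ≤ hi i
      simp only [hhi]
      simpa using h1 {i}
  have hcompact : IsCompact (basePolytope F) :=
    (isCompact_Icc).of_isClosed_subset hclosed hsubset
  have hcont : Continuous (fun s : V → ℝ => ∑ i : V, Real.log (1 + Real.exp (-(s i)))) := by
    apply continuous_finset_sum
    intro i _
    refine Continuous.log ?_ ?_
    · exact continuous_const.add ((continuous_apply i).neg.rexp)
    · intro s
      positivity
  obtain ⟨s, hsmem, hmin⟩ := hcompact.exists_isMinOn hne hcont.continuousOn
  exact ⟨s, hsmem, fun z hz => hmin hz⟩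

noncomputable def maxGap (F : Finset V → ℝ) (q : V → ℝ) : ℝ :=
  (Finset.univ : Finset (Finset V)).sup' Finset.univ_nonempty
    (fun S => (∑ i ∈ S, q i) - F S)

lemma maxGap_nonneg {F : Finset V → ℝ} (hF0 : F ∅ = 0) (q : V → ℝ) : 0 ≤ maxGap F q := by
  have h := Finset.le_sup' (fun S => (∑ i ∈ S, q i) - F S) (Finset.mem_univ (∅ : Finset V))
  refine le_trans (le_of_eq ?_) h
  simp [hF0]

lemma maxGap_eq_zero {F : Finset V → ℝ} (hF0 : F ∅ = 0) {q : V → ℝ}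
    (hq : ∀ A : Finset V, ∑ i ∈ A, q i ≤ F A) : maxGap F q = 0 := by
  refine le_antisymm ?_ (maxGap_nonneg hF0 q)
  apply Finset.sup'_le
  intro S _
  have := hq S
  linarith

lemma dInfty_eq (F : Finset V → ℝ) (q : V → ℝ) :
    dInfty F q = maxGap F q - Real.log (∑ A : Finset V, Real.exp (-(F A)))
      + ∑ i : V, Real.log (1 + Real.exp (-(q i))) := by
  have hZp : (0:ℝ) < ∑ A : Finset V, Real.exp (-(F A)) := Zp_pos F
  have hZq : (0:ℝ) < ∑ A : Finset V, Real.exp (-(∑ i ∈ A, q i)) := Zq_pos q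
  set Zp := ∑ A : Finset V, Real.exp (-(F A)) with hZpdef
  set Zq := ∑ A : Finset V, Real.exp (-(∑ i ∈ A, q i)) with hZqdef
  set K := Zq / Zp with hK
  have hKpos : 0 < K := div_pos hZq hZp
  have hfun : (fun S : Finset V => (Real.exp (-(F S)) / Zp) /
      (Real.exp (-(∑ i ∈ S, q i)) / Zq))
      = fun S : Finset V => Real.exp ((∑ i ∈ S, q i) - F S) * K := by
    funext S
    have he : Real.exp ((∑ i ∈ S, q i) - F S)
        = Real.exp (-(F S)) / Real.exp (-(∑ i ∈ S, q i)) := by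
      rw [← Real.exp_sub]
      ring_nf
    rw [he, hK]
    field_simp
  have hg : ∀ x y : ℝ, Real.exp (x ⊔ y) * K = (Real.exp x * K) ⊔ (Real.exp y * K) := by
    intro x y
    have hmono : Monotone (fun x : ℝ => Real.exp x * K) :=
      fun a b hab => mul_le_mul_of_nonneg_right (Real.exp_le_exp.mpr hab) hKpos.le
    exact hmono.map_max
  have hsup : (Finset.univ : Finset (Finset V)).sup' Finset.univ_nonempty
      (fun S : Finset V => Real.exp ((∑ i ∈ S, q i) - F S) * K)
      = Real.exp (maxGap F q) * K := by
    rw [maxGap]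
    exact (Finset.comp_sup'_eq_sup'_comp Finset.univ_nonempty
      (fun x : ℝ => Real.exp x * K) hg).symm
  rw [dInfty, hfun, hsup, hK]
  rw [Real.log_mul (Real.exp_ne_zero _) (by positivity), Real.log_exp,
    Real.log_div (ne_of_gt hZq) (ne_of_gt hZp), hZqdef, log_sum_exp]
  ring

lemma log_one_add_exp_neg (x : ℝ) :
    Real.log (1 + Real.exp (-x)) = Real.log (1 + Real.exp x) - x := by
  have h : 1 + Real.exp (-x) = (1 + Real.exp x) * Real.exp (-x) := by
    rw [add_mul, one_mul, ← Real.exp_add]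
    rw [add_neg_cancel, Real.exp_zero, add_comm]
  rw [h, Real.log_mul (by positivity) (Real.exp_ne_zero _), Real.log_exp]
  ring

end aux3


/-- `min_Q D_∞(P‖Q) = -log Z_P + min_{s∈B(F)} ∑ log(1+exp(-sᵢ))`
and both problems have the same optimal modular parameter. -/
theorem stmt_9 {V : Type*} [Fintype V] [DecidableEq V]
    (F : Finset V → ℝ) (hsub : Submodular F) (hF0 : F ∅ = 0) :
    ∃ s : V → ℝ, s ∈ basePolytope F ∧
      (∀ z ∈ basePolytope F,
        ∑ i : V, Real.log (1 + Real.exp (-(s i)))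
          ≤ ∑ i : V, Real.log (1 + Real.exp (-(z i)))) ∧
      (∀ q : V → ℝ, dInfty F s ≤ dInfty F q) ∧
      dInfty F s = -Real.log (∑ A : Finset V, Real.exp (-(F A)))
        + ∑ i : V, Real.log (1 + Real.exp (-(s i))) := by

  obtain ⟨s, hsB, hsmin⟩ := exists_min_on_base hsub hF0
  have hseq : dInfty F s = -Real.log (∑ A : Finset V, Real.exp (-(F A)))
      + ∑ i : V, Real.log (1 + Real.exp (-(s i))) := by
    rw [dInfty_eq, maxGap_eq_zero hF0 hsB.1]
    ring
  refine ⟨s, hsB, hsmin, ?_, hseq⟩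
  intro q
  rcases isEmpty_or_nonempty V with hV | hV
  · have hqs : s = q := funext fun i => (IsEmpty.false i).elim
    exact le_of_eq (by rw [hqs])
  · set c := maxGap F q with hc
    have hc0 : 0 ≤ c := maxGap_nonneg hF0 q
    set G : Finset V → ℝ := fun A => if A = ∅ then 0 else F A + c with hGdef
    have hG0 : G ∅ = 0 := by simp [hGdef]
    have hGsub : Submodular G := by
      intro A B hAB x hxB
      by_cases hB : B = ∅
      · have hA : A = ∅ := Finset.subset_empty.mp (hB ▸ hAB)
        subst hB; subst hA
        exact le_rfl
      · by_cases hA : A = ∅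
        · subst hA
          simp only [hGdef, if_neg hB, if_neg (Finset.insert_ne_empty x B), if_pos rfl,
            if_neg (Finset.insert_ne_empty x (∅ : Finset V))]
          have h := hsub ∅ B (Finset.empty_subset B) x hxB
          rw [hF0] at h
          linarith
        · simp only [hGdef, if_neg hB, if_neg hA, if_neg (Finset.insert_ne_empty x B),
            if_neg (Finset.insert_ne_empty x A)]
          have h := hsub A B hAB x hxB
          linarith
    have hqG : ∀ A : Finset V, ∑ i ∈ A, q i ≤ G A := by
      intro A
      by_cases hA : A = ∅
      · subst hA; simp [hGdef]
      · have h : (∑ i ∈ A, q i) - F A ≤ c :=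
          Finset.le_sup' (fun S => (∑ i ∈ S, q i) - F S) (Finset.mem_univ A)
        simp only [hGdef, if_neg hA]
        linarith
    obtain ⟨s₁, hqs₁, hs₁P, hs₁B⟩ := exists_base_ge hGsub hG0 Finset.univ q hqG
      (fun i hi => absurd (Finset.mem_univ i) hi)
    have huniv_ne : (Finset.univ : Finset V) ≠ ∅ := Finset.univ_nonempty.ne_empty
    have hs₁sum : ∑ i : V, s₁ i = F Finset.univ + c := by
      rw [hs₁B]; simp [hGdef, huniv_ne]
    have hu : ∀ A : Finset V, F Finset.univ - ∑ i ∈ A, s₁ i ≤ F (Finset.univ \ A) := by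
      intro A
      have hsplit : ∑ i ∈ Finset.univ \ A, s₁ i + ∑ i ∈ A, s₁ i = ∑ i : V, s₁ i :=
        Finset.sum_sdiff (Finset.subset_univ A)
      have h1 : ∑ i ∈ Finset.univ \ A, s₁ i ≤ F (Finset.univ \ A) + c := by
        have h := hs₁P (Finset.univ \ A)
        by_cases hUA : Finset.univ \ A = ∅
        · rw [hUA]
          simp only [Finset.sum_empty]
          rw [hF0]
          linarith
        · simp only [hGdef, if_neg hUA] at h
          exact h
      rw [hs₁sum] at hsplit
      linarith
    obtain ⟨s', hs'le, hs'P, hs'sum⟩ := exists_base_le hsub hF0 s₁ hu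
    have hΦmin : ∑ i : V, Real.log (1 + Real.exp (-(s i)))
        ≤ ∑ i : V, Real.log (1 + Real.exp (-(s' i))) :=
      hsmin s' ⟨hs'P, hs'sum⟩
    have hstep1 : ∑ i : V, Real.log (1 + Real.exp (-(s' i)))
        ≤ (∑ i : V, Real.log (1 + Real.exp (-(s₁ i)))) + c := by
      have h1 : ∀ i : V, Real.log (1 + Real.exp (-(s' i)))
          ≤ Real.log (1 + Real.exp (-(s₁ i))) + (s₁ i - s' i) := by
        intro i
        rw [log_one_add_exp_neg (s' i), log_one_add_exp_neg (s₁ i)]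
        have h2 : Real.log (1 + Real.exp (s' i)) ≤ Real.log (1 + Real.exp (s₁ i)) :=
          Real.log_le_log (by positivity) (by linarith [Real.exp_le_exp.mpr (hs'le i)])
        linarith
      calc ∑ i : V, Real.log (1 + Real.exp (-(s' i)))
          ≤ ∑ i : V, (Real.log (1 + Real.exp (-(s₁ i))) + (s₁ i - s' i)) :=
            Finset.sum_le_sum fun i _ => h1 i
        _ = (∑ i : V, Real.log (1 + Real.exp (-(s₁ i))))
              + (∑ i : V, s₁ i - ∑ i : V, s' i) := by
            rw [Finset.sum_add_distrib, Finset.sum_sub_distrib]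
        _ = (∑ i : V, Real.log (1 + Real.exp (-(s₁ i)))) + c := by
            rw [hs₁sum, hs'sum]; ring
    have hstep2 : ∑ i : V, Real.log (1 + Real.exp (-(s₁ i)))
        ≤ ∑ i : V, Real.log (1 + Real.exp (-(q i))) := by
      apply Finset.sum_le_sum
      intro i _
      apply Real.log_le_log (by positivity)
      have h3 := Real.exp_le_exp.mpr (neg_le_neg (hqs₁ i))
      linarith
    rw [hseq, dInfty_eq F q, ← hc]
    linarith
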